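/- Let f : B → A be a local ring homomorphism and suppose A is a local ring. Then B is a local ring and f⁻¹(rad A) = rad B. -/
import Mathlib

lemma oneByOne_isUnit {R : Type*} [Ring R] (M : Matrix (Fin 1) (Fin 1) R) :
    IsUnit M ↔ IsUnit (M 0 0) := by
  constructor
  · rintro ⟨u, rfl⟩
    have h1 : (u.val * u⁻¹.val) 0 0 = u.val 0 0 * u⁻¹.val 0 0 := by
      rw [Matrix.mul_apply, Fin.sum_univ_one]
    have h2 : (u⁻¹.val * u.val) 0 0 = u⁻¹.val 0 0 * u.val 0 0 := by
      rw [Matrix.mul_apply, Fin.sum_univ_one]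
    rw [u.mul_inv, Matrix.one_apply_eq] at h1
    rw [u.inv_mul, Matrix.one_apply_eq] at h2
    exact isUnit_iff_exists.mpr ⟨u⁻¹.val 0 0, h1.symm, h2.symm⟩
  · rintro ⟨u, hu⟩
    refine isUnit_iff_exists.mpr ⟨Matrix.of (fun _ _ => ((u⁻¹ : Rˣ) : R)), ?_, ?_⟩ <;>
    · ext i j
      fin_cases i; fin_cases j
      simp [Matrix.mul_apply, ← hu, Matrix.one_apply]

lemma loc_unit_of_left_inv {R : Type*} [Ring R] [IsLocalRing R] {u x : R} (h : u * x = 1) :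
    IsUnit x := by
  rcases IsLocalRing.isUnit_or_isUnit_of_add_one (a := x * u) (b := 1 - x * u)
      (by noncomm_ring) with hx | hx
  · rcases hx with ⟨v, hv⟩
    -- x has right inverse u * v⁻¹ and left inverse u
    have hr : x * (u * ((v⁻¹ : Rˣ) : R)) = 1 := by
      rw [← mul_assoc, ← hv, v.mul_inv]
    have heq : u * ((v⁻¹ : Rˣ) : R) = u := by
      conv_rhs => rw [← mul_one u, ← hr, ← mul_assoc, ← mul_assoc, h, one_mul]
    exact isUnit_iff_exists.mpr ⟨u * ((v⁻¹ : Rˣ) : R), hr, by rw [heq, h]⟩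
  · have h0 : (1 - x * u) * x = 0 := by
      have hx' : x * (u * x) = x := by rw [h, mul_one]
      have : (1 - x * u) * x = x - x * (u * x) := by noncomm_ring
      rw [this, hx', sub_self]
    rcases hx with ⟨v, hv⟩
    have hx0 : x = 0 := by
      have := congrArg (fun t => ((v⁻¹ : Rˣ) : R) * t) h0
      simp only [← hv, mul_zero] at this
      rwa [← mul_assoc, v.inv_mul, one_mul] at this
    exfalso
    apply one_ne_zero (α := R)
    rw [← h, hx0, mul_zero]

lemma loc_mem_jacobson_bot {R : Type*} [Ring R] [IsLocalRing R] (x : R) :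
    x ∈ Ideal.jacobson (⊥ : Ideal R) ↔ ¬ IsUnit x := by
  constructor
  · intro hx hu
    have ht : Ideal.jacobson (⊥ : Ideal R) = ⊤ := Ideal.eq_top_of_isUnit_mem _ hx hu
    rw [Ideal.jacobson_eq_top_iff] at ht
    exact one_ne_zero ((Submodule.mem_bot R).mp (ht ▸ Submodule.mem_top : (1 : R) ∈ (⊥ : Ideal R)))
  · intro hx
    rw [Ideal.mem_jacobson_iff]
    intro y
    have hyx : ¬ IsUnit (y * x) := by
      rintro ⟨v, hv⟩
      exact hx (loc_unit_of_left_inv (u := ((v⁻¹ : Rˣ) : R) * y)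
        (by rw [mul_assoc, ← hv, v.inv_mul]))
    have hu : IsUnit (y * x + 1) := by
      rcases IsLocalRing.isUnit_or_isUnit_of_add_one (a := -(y*x)) (b := y*x+1)
        (by abel) with h | h
      · exact absurd (by simpa using h.neg) hyx
      · exact h
    rcases hu with ⟨v, hv⟩
    refine ⟨((v⁻¹ : Rˣ) : R), ?_⟩
    have : ((v⁻¹ : Rˣ) : R) * (y * x + 1) = 1 := by rw [← hv, v.inv_mul]
    rw [Ideal.mem_bot]
    rw [mul_add, mul_one] at this
    rw [mul_assoc, this, sub_self]

/-- A ring homomorphism is *local* if it reflects invertibility of square matrices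
of every size. -/
def MatLocal {B A : Type*} [Ring B] [Ring A] (f : B →+* A) : Prop :=
  ∀ (n : ℕ) (α : Matrix (Fin n) (Fin n) B), IsUnit (α.map f) → IsUnit α

/-- If `f : B → A` is a local homomorphism and `A` is a local ring, then `B` is a
local ring and `f⁻¹(rad A) = rad B`. -/
theorem stmt8 {B A : Type*} [Ring B] [Ring A] [IsLocalRing A]
    (f : B →+* A) (hf : MatLocal f) :
    IsLocalRing B ∧
      ∀ x : B, f x ∈ Ideal.jacobson (⊥ : Ideal A) ↔ x ∈ Ideal.jacobson (⊥ : Ideal B) := by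
  have h1 : ∀ x : B, IsUnit (f x) → IsUnit x := by
    intro x hx
    have hm : IsUnit ((Matrix.of (fun _ _ => x) : Matrix (Fin 1) (Fin 1) B).map f) := by
      rw [oneByOne_isUnit]
      simpa [Matrix.map_apply] using hx
    have := hf 1 _ hm
    rw [oneByOne_isUnit] at this
    simpa using this
  haveI : Nontrivial B := ⟨⟨0, 1, fun h => by
    have := congrArg f h
    rw [map_zero, map_one] at this
    exact zero_ne_one this⟩⟩
  have hB : IsLocalRing B :=
    { isUnit_or_isUnit_of_add_one := fun {a b} h => by
        have hA : f a + f b = 1 := by rw [← map_add, h, map_one]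
        rcases IsLocalRing.isUnit_or_isUnit_of_add_one hA with h' | h'
        · exact Or.inl (h1 a h')
        · exact Or.inr (h1 b h') }
  haveI := hB
  refine ⟨hB, fun x => ?_⟩
  rw [loc_mem_jacobson_bot, loc_mem_jacobson_bot]
  exact ⟨fun h hu => h (hu.map f), fun h hu => h (h1 x hu)⟩
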